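/- Let k be a field, G a finite group whose order is invertible in k (i.e. the characteristic of k is zero or does not divide |G|), and z : G × G → kˣ a normalized 2-cocycle with trivial action, i.e. z(g₂,g₃) · z(g₁,g₂g₃) = z(g₁g₂,g₃) · z(g₁,g₂) for all g₁,g₂,g₃ ∈ G and z(g,e) = z(e,g) = 1. Let A be an associative unital k-algebra equipped with a k-basis (e_g)_{g∈G} indexed by G such that e_g · e_{g'} = z(g,g') · e_{g g'} for all g, g' ∈ G (a twisted group algebra k[G]_z). Then A is a semisimple ring. -/

import Mathlib

/-- Maschke for twisted group algebras: if the order of the finite group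
`G` is invertible in `k`, any twisted group algebra `k[G]_z` is a semisimple ring. -/
theorem twisted_group_algebra_semisimple
    {k G A : Type*} [Field k] [Group G] [Fintype G] [Ring A] [Algebra k A]
    (hcard : IsUnit (Fintype.card G : k))
    (z : G → G → kˣ)
    (hz : ∀ g₁ g₂ g₃ : G, z g₂ g₃ * z g₁ (g₂ * g₃) = z (g₁ * g₂) g₃ * z g₁ g₂)
    (hznorm : ∀ g : G, z g 1 = 1 ∧ z 1 g = 1)
    (e : Module.Basis G k A)
    (he : ∀ g g' : G, e g * e g' = (z g g' : k) • e (g * g')) :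
    IsSemisimpleRing A := by
  classical
  -- Step 1 : `e 1 = 1`
  have he1 : e 1 = (1 : A) := by
    have hL : LinearMap.mulLeft k (e 1) = LinearMap.id := by
      apply e.ext
      intro g
      simp [LinearMap.mulLeft_apply, he 1 g, (hznorm g).2]
    have := congrArg (fun f => f (1 : A)) hL
    simpa using this
  -- symmetry of `z g g⁻¹`
  have hzsymm : ∀ g : G, z g⁻¹ g = z g g⁻¹ := by
    intro g
    have := hz g g⁻¹ g
    simpa [(hznorm g).1, (hznorm g).2] using this
  -- Step 2 : each `e g` is a unit
  have hz0 : ∀ g g' : G, ((z g g' : kˣ) : k) ≠ 0 := fun g g' => Units.ne_zero _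
  let u : G → Aˣ := fun g =>
    { val := e g
      inv := ((z g g⁻¹ : kˣ) : k)⁻¹ • e g⁻¹
      val_inv := by
        rw [mul_smul_comm, he g g⁻¹, mul_inv_cancel, he1, smul_smul,
          inv_mul_cancel₀ (hz0 g g⁻¹), one_smul]
      inv_val := by
        rw [smul_mul_assoc, he g⁻¹ g, inv_mul_cancel, he1, smul_smul, hzsymm g,
          inv_mul_cancel₀ (hz0 g g⁻¹), one_smul] }
  have hu : ∀ g : G, (u g : A) = e g := fun g => rfl
  refine (isSemisimpleModule_iff A A).mpr ?_
  constructor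
  intro W
  -- Step 3 : a k-linear projection onto W
  obtain ⟨V, hV⟩ := Submodule.exists_isCompl (W.restrictScalars k)
  set π : A →ₗ[k] A :=
    (W.restrictScalars k).subtype.comp
      (Submodule.linearProjOfIsCompl _ _ hV) with hπ
  have hπmem : ∀ x : A, π x ∈ W := fun x => ((Submodule.linearProjOfIsCompl _ _ hV) x).2
  have hπid : ∀ w ∈ W, π w = w := by
    intro w hw
    simp [hπ, Submodule.linearProjOfIsCompl_apply_left hV ⟨w, hw⟩]
    exact congrArg Subtype.val (Submodule.linearProjOfIsCompl_apply_left hV ⟨w, hw⟩)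
  -- Step 4 : the averaged projection
  set c : k := ((hcard.unit⁻¹ : kˣ) : k) with hc
  let p : A →ₗ[k] A :=
    c • ∑ g : G, (LinearMap.mulLeft k (((u g)⁻¹ : Aˣ) : A)).comp
      (π.comp (LinearMap.mulLeft k (e g)))
  have hp_apply : ∀ x : A,
      p x = c • ∑ g : G, (((u g)⁻¹ : Aˣ) : A) * π (e g * x) := by
    intro x
    simp [p, LinearMap.sum_apply, LinearMap.mulLeft_apply]
  -- the key identity
  have key : ∀ g h : G, e h * (((u (g * h))⁻¹ : Aˣ) : A)
      = ((z g h : kˣ) : k) • (((u g)⁻¹ : Aˣ) : A) := by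
    intro g h
    have h1 : (((u g)⁻¹ : Aˣ) : A) * ((e g * e h) * (((u (g * h))⁻¹ : Aˣ) : A))
        = e h * (((u (g * h))⁻¹ : Aˣ) : A) := by
      rw [mul_assoc (e g), ← mul_assoc, ← hu g, Units.inv_mul, one_mul]
    have h2 : (((u g)⁻¹ : Aˣ) : A) * ((e g * e h) * (((u (g * h))⁻¹ : Aˣ) : A))
        = ((z g h : kˣ) : k) • (((u g)⁻¹ : Aˣ) : A) := by
      rw [he g h, smul_mul_assoc, ← hu (g * h), Units.mul_inv, mul_smul_comm, mul_one]
    rw [← h1, h2]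
  -- Step 5 : p is A-linear
  have hgen : ∀ (h : G) (x : A), p (e h * x) = e h * p x := by
    intro h x
    have step : ∀ g : G, (((u g)⁻¹ : Aˣ) : A) * π (e g * (e h * x))
        = e h * ((((u (g * h))⁻¹ : Aˣ) : A) * π (e (g * h) * x)) := by
      intro g
      have h3 : e g * (e h * x) = ((z g h : kˣ) : k) • (e (g * h) * x) := by
        rw [← mul_assoc, he g h, smul_mul_assoc]
      rw [h3, map_smul, mul_smul_comm, ← mul_assoc, key g h, smul_mul_assoc]
    calc p (e h * x)
        = c • ∑ g : G, (((u g)⁻¹ : Aˣ) : A) * π (e g * (e h * x)) := hp_apply _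
      _ = c • ∑ g : G, e h * ((((u (g * h))⁻¹ : Aˣ) : A) * π (e (g * h) * x)) := by
          rw [Finset.sum_congr rfl fun g _ => step g]
      _ = c • ∑ g : G, e h * ((((u g)⁻¹ : Aˣ) : A) * π (e g * x)) := by
          congr 1
          exact Fintype.sum_equiv (Equiv.mulRight h) _ _ (fun g => rfl)
      _ = e h * (c • ∑ g : G, (((u g)⁻¹ : Aˣ) : A) * π (e g * x)) := by
          rw [← Finset.mul_sum, mul_smul_comm]
      _ = e h * p x := by rw [hp_apply]
  have hsmul : ∀ (a x : A), p (a * x) = a * p x := by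
    intro a x
    have hmaps : p.comp (LinearMap.mulRight k x) = LinearMap.mulRight k (p x) := by
      apply e.ext
      intro g
      simp only [LinearMap.comp_apply, LinearMap.mulRight_apply]
      exact hgen g x
    have := congrArg (fun f => f a) hmaps
    simpa using this
  -- Step 6 : p maps into W and is the identity on W
  have hpmem : ∀ x : A, p x ∈ W := by
    intro x
    rw [hp_apply]
    have hsum : (∑ g : G, (((u g)⁻¹ : Aˣ) : A) * π (e g * x)) ∈ W := by
      apply Submodule.sum_mem
      intro g _
      have := W.smul_mem (((u g)⁻¹ : Aˣ) : A) (hπmem (e g * x))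
      simpa [smul_eq_mul] using this
    exact (W.restrictScalars k).smul_mem c hsum
  have hpid : ∀ w ∈ W, p w = w := by
    intro w hw
    have step : ∀ g : G, (((u g)⁻¹ : Aˣ) : A) * π (e g * w) = w := by
      intro g
      have hmem : e g * w ∈ W := by
        have := W.smul_mem (e g) hw
        simpa [smul_eq_mul] using this
      rw [hπid _ hmem, ← mul_assoc, ← hu g, Units.inv_mul, one_mul]
    have h1 : c * (Fintype.card G : k) = 1 := by
      have h2 := hcard.unit.inv_mul
      rwa [IsUnit.unit_spec] at h2
    rw [hp_apply, Finset.sum_congr rfl fun g _ => step g, Finset.sum_const,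
      Finset.card_univ, ← Nat.cast_smul_eq_nsmul k, smul_smul, h1, one_smul]
  -- Step 7 : conclude
  let P0 : A →ₗ[A] A :=
    { toFun := p
      map_add' := p.map_add
      map_smul' := fun a x => by simpa [smul_eq_mul] using hsmul a x }
  let P : A →ₗ[A] W := P0.codRestrict W hpmem
  have hP : ∀ w : W, P (w : A) = w := by
    intro w
    apply Subtype.ext
    exact hpid w.1 w.2
  exact ⟨_, LinearMap.isCompl_of_proj hP⟩
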